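/- The global function f_L of the sand automaton L is surjective on all configurations and P-surjective: every configuration has a preimage under f_L, and every periodic configuration has a periodic preimage under f_L. -/

import Mathlib

/-- The extended integers `ℤ ∪ {-∞, +∞}`. -/
abbrev EZ : Type := WithBot (WithTop ℤ)

/-- Embedding of `ℤ` into the extended integers. -/
def finVal (n : ℤ) : EZ := ((n : WithTop ℤ) : EZ)

/-- The integer value of a finite extended integer (`0` on `±∞`). -/
def valZ (x : EZ) : ℤ := WithBot.recBotCoe 0 (fun y => WithTop.recTopCoe 0 id y) x

/-- The measuring device `β_l^m`. -/
noncomputable def beta (l : ℕ) (m : ℤ) (n : EZ) : EZ :=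
  if finVal (m + (l : ℤ)) < n then ⊤
  else if n < finVal (m - (l : ℤ)) then ⊥
  else WithBot.map (WithTop.map (fun k => k - m)) n

/-- Reference height: the value of `x` if finite, `0` if `x = ±∞`. -/
def refH (x : EZ) : ℤ := if x = ⊥ ∨ x = ⊤ then 0 else valZ x

/-- One-dimensional sandpile configurations. -/
abbrev Config : Type := ℤ → EZ

/-- The neighborhood sequence `d_r^i(c)`: the `2r`-tuple of measured differences. -/
noncomputable def nbhd (r : ℕ) (c : Config) (i : ℤ) : Fin (2 * r) → EZ :=
  fun j => beta r (refH (c i))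
    (c (i + (if (j : ℕ) < r then ((j : ℕ) : ℤ) - (r : ℤ) else ((j : ℕ) : ℤ) - (r : ℤ) + 1)))

/-- The global function of the sand automaton of radius `r` with local rule `lam`. -/
noncomputable def globalF (r : ℕ) (lam : (Fin (2 * r) → EZ) → ℤ) (c : Config) : Config :=
  fun i => if c i = ⊥ ∨ c i = ⊤ then c i
    else finVal (valZ (c i) + lam (nbhd r c i))

/-- Finite configurations. -/
def FiniteConf (c : Config) : Prop := ∃ k : ℕ, ∀ i : ℤ, (k : ℤ) ≤ |i| → c i = finVal 0

/-- Periodic configurations. -/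
def PeriodicConf (c : Config) : Prop := ∃ p : ℤ, p ≠ 0 ∧ ∀ i : ℤ, c (i + p) = c i


/-- The local rule of the sand automaton `L`:
`λ_L(x,y) = -1` if `x < 0`, `+1` if `x > 0`, `0` otherwise. -/
noncomputable def lamL (v : Fin 2 → EZ) : ℤ :=
  if v 0 < finVal 0 then -1
  else if finVal 0 < v 0 then 1
  else 0

noncomputable section
open Classical

lemma finVal_ne_bot (n : ℤ) : finVal n ≠ ⊥ := by simp [finVal]
lemma finVal_ne_top (n : ℤ) : finVal n ≠ ⊤ := by simp [finVal]
lemma finVal_inj {a b : ℤ} (h : finVal a = finVal b) : a = b := by simpa [finVal] using h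
lemma finVal_lt_finVal {a b : ℤ} : finVal a < finVal b ↔ a < b := by simp [finVal]
lemma bot_lt_finVal (n : ℤ) : (⊥ : EZ) < finVal n := by simp [finVal]
lemma finVal_lt_top (n : ℤ) : finVal n < (⊤ : EZ) := by
  show ((n : WithTop ℤ) : EZ) < ((⊤ : WithTop ℤ) : EZ)
  exact WithBot.coe_lt_coe.mpr (WithTop.coe_lt_top n)
lemma valZ_finVal (n : ℤ) : valZ (finVal n) = n := rfl
lemma refH_finVal (n : ℤ) : refH (finVal n) = n := by
  simp [refH, finVal_ne_bot, finVal_ne_top, valZ_finVal]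
lemma EZ_cases (x : EZ) : x = ⊥ ∨ x = ⊤ ∨ ∃ n, x = finVal n := by
  rcases x with _ | x
  · exact Or.inl rfl
  rcases x with _ | n
  · exact Or.inr (Or.inl rfl)
  · exact Or.inr (Or.inr ⟨n, rfl⟩)
lemma finVal_not_inf (n : ℤ) : ¬ (finVal n = ⊥ ∨ finVal n = ⊤) :=
  not_or.mpr ⟨finVal_ne_bot n, finVal_ne_top n⟩

lemma beta_map (m a : ℤ) :
    WithBot.map (WithTop.map (fun k => k - m)) (finVal a) = finVal (a - m) := by
  simp [finVal]

lemma beta_of_lt {m : ℤ} {x : EZ} (h : x < finVal m) : beta 1 m x < finVal 0 := by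
  rcases EZ_cases x with hx | hx | ⟨a, hx⟩
  · subst hx
    rw [beta, if_neg (by exact not_lt_bot), if_pos (bot_lt_finVal _)]
    exact bot_lt_finVal 0
  · subst hx
    exact absurd h (not_lt.mpr le_top)
  · subst hx
    have ha : a < m := finVal_lt_finVal.mp h
    rw [beta, if_neg (by rw [finVal_lt_finVal.not]; push_cast; omega)]
    by_cases h2 : finVal a < finVal (m - (1:ℕ))
    · rw [if_pos h2]; exact bot_lt_finVal 0
    · rw [if_neg h2, beta_map]
      rw [finVal_lt_finVal.not] at h2
      exact finVal_lt_finVal.mpr (by push_cast at h2 ⊢; omega)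

lemma beta_of_eq (m : ℤ) : beta 1 m (finVal m) = finVal 0 := by
  rw [beta, if_neg (by rw [finVal_lt_finVal.not]; push_cast; omega),
    if_neg (by rw [finVal_lt_finVal.not]; push_cast; omega), beta_map]
  norm_num

lemma beta_of_gt {m : ℤ} {x : EZ} (h : finVal m < x) : finVal 0 < beta 1 m x := by
  rcases EZ_cases x with hx | hx | ⟨a, hx⟩
  · subst hx; exact absurd h (not_lt.mpr bot_le)
  · subst hx
    rw [beta, if_pos (finVal_lt_top _)]
    exact finVal_lt_top 0
  · subst hx
    have ha : m < a := finVal_lt_finVal.mp h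
    by_cases h1 : finVal (m + (1:ℕ)) < finVal a
    · rw [beta, if_pos h1]; exact finVal_lt_top 0
    · rw [beta, if_neg h1, if_neg (by rw [finVal_lt_finVal.not]; push_cast; omega), beta_map]
      rw [finVal_lt_finVal.not] at h1
      exact finVal_lt_finVal.mpr (by push_cast at h1 ⊢; omega)

/-- base shift: `1` if left neighbor lower, `-1` otherwise -/
def sBase (c : Config) (i : ℤ) : ℤ := if c (i - 1) < c i then 1 else -1

/-- plateau cell: left neighbor equal and finite -/
def Plat (c : Config) (i : ℤ) : Prop := ∃ n : ℤ, c (i - 1) = finVal n ∧ c i = finVal n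

/-- the shift applied to cell `i` to build a preimage -/
def sVal (c : Config) (i : ℤ) : ℤ :=
  if Plat c i then
    if h : ∃ k : ℕ, ¬ Plat c (i - (k + 1)) then
      (-1) ^ (Nat.find h) * (-sBase c (i - (Nat.find h : ℤ) - 1))
    else 0
  else sBase c i

/-- the preimage configuration -/
def pre (c : Config) : Config := fun i =>
  if c i = ⊥ ∨ c i = ⊤ then c i else finVal (valZ (c i) + sVal c i)

lemma sBase_range (c : Config) (i : ℤ) : sBase c i = 1 ∨ sBase c i = -1 := by
  rw [sBase]; split <;> simp

lemma sVal_range (c : Config) (i : ℤ) : sVal c i = 1 ∨ sVal c i = 0 ∨ sVal c i = -1 := by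
  rw [sVal]
  split
  · split
    · rename_i h
      rcases sBase_range c (i - (Nat.find h : ℤ) - 1) with hb | hb <;>
        rcases Nat.even_or_odd (Nat.find h) with he | he <;>
          rw [hb] <;> [rw [he.neg_one_pow]; rw [he.neg_one_pow];
            rw [he.neg_one_pow]; rw [he.neg_one_pow]] <;> omega
    · right; left; rfl
  · rcases sBase_range c i with h | h
    exacts [Or.inl h, Or.inr (Or.inr h)]

lemma find_eq {p q : ℕ → Prop} [DecidablePred p] [DecidablePred q]
    (hp : ∃ n, p n) (hq : ∃ n, q n) (h : ∀ n, p n ↔ q n) : Nat.find hp = Nat.find hq :=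
  le_antisymm (Nat.find_le ((h _).mpr (Nat.find_spec hq)))
    (Nat.find_le ((h _).mp (Nat.find_spec hp)))

lemma sVal_plat (c : Config) (i : ℤ) (hp : Plat c i) : sVal c (i - 1) = - sVal c i := by
  by_cases h : ∃ k : ℕ, ¬ Plat c (i - (k + 1))
  · conv_rhs => rw [sVal, if_pos hp, dif_pos h]
    rcases hk : Nat.find h with _ | k'
    · have h0 : ¬ Plat c (i - 1) := by
        have hs := Nat.find_spec h
        rw [hk] at hs
        rwa [show i - (((0 : ℕ) : ℤ) + 1) = i - 1 by push_cast; ring] at hs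
      rw [sVal, if_neg h0]
      rw [show i - ((0 : ℕ) : ℤ) - 1 = i - 1 by push_cast; ring]
      ring
    · have hp1 : Plat c (i - 1) := by
        have h0 := Nat.find_min h (m := 0) (by omega)
        push_neg at h0
        rwa [show i - (((0 : ℕ) : ℤ) + 1) = i - 1 by push_cast; ring] at h0
      have hspec : ¬ Plat c (i - 1 - ((k' : ℤ) + 1)) := by
        have hs := Nat.find_spec h
        rw [hk] at hs
        rwa [show i - (((k' + 1 : ℕ) : ℤ) + 1) = i - 1 - ((k' : ℤ) + 1) by push_cast; ring] at hs
      have h' : ∃ k : ℕ, ¬ Plat c ((i - 1) - (k + 1)) := ⟨k', hspec⟩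
      have hfind : Nat.find h' = k' := by
        apply le_antisymm (Nat.find_le hspec)
        by_contra hcon
        push_neg at hcon
        have hs' := Nat.find_spec h'
        have hmin := Nat.find_min h (m := Nat.find h' + 1) (by omega)
        push_neg at hmin
        apply hs'
        rwa [show i - (((Nat.find h' + 1 : ℕ) : ℤ) + 1) = i - 1 - ((Nat.find h' : ℤ) + 1)
          by push_cast; ring] at hmin
      rw [sVal, if_pos hp1, dif_pos h', hfind]
      rw [show i - 1 - (k' : ℤ) - 1 = i - ((k' + 1 : ℕ) : ℤ) - 1 by push_cast; ring, pow_succ]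
      ring
  · have hall : ∀ k : ℕ, Plat c (i - (k + 1)) := by
      push_neg at h; exact h
    conv_rhs => rw [sVal, if_pos hp, dif_neg h]
    have hp1 : Plat c (i - 1) := by
      have h0 := hall 0
      rwa [show i - (((0 : ℕ) : ℤ) + 1) = i - 1 by push_cast; ring] at h0
    have h1 : ¬ ∃ k : ℕ, ¬ Plat c ((i - 1) - (k + 1)) := by
      push_neg
      intro k
      have h2 := hall (k + 1)
      rwa [show i - (((k + 1 : ℕ) : ℤ) + 1) = i - 1 - ((k : ℤ) + 1) by push_cast; ring] at h2
    rw [sVal, if_pos hp1, dif_neg h1]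
    ring

lemma pre_fin {c : Config} {i b : ℤ} (h : c i = finVal b) :
    pre c i = finVal (b + sVal c i) := by
  rw [pre, if_neg (by rw [h]; exact finVal_not_inf b), h, valZ_finVal]

lemma cmp_lemma (c : Config) (i b : ℤ) (hb : c i = finVal b) :
    (sVal c i = 1 ∧ pre c (i - 1) < finVal (b + 1)) ∨
    (sVal c i = 0 ∧ pre c (i - 1) = finVal b) ∨
    (sVal c i = -1 ∧ finVal (b - 1) < pre c (i - 1)) := by
  rcases EZ_cases (c (i - 1)) with hl | hl | ⟨a, hl⟩
  · -- left neighbor is ⊥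
    have hnp : ¬ Plat c i := by
      rintro ⟨n, hn1, hn2⟩
      exact finVal_ne_bot n (hn1.symm.trans hl)
    have hs : sVal c i = 1 := by
      rw [sVal, if_neg hnp, sBase, if_pos (by rw [hl, hb]; exact bot_lt_finVal b)]
    left
    refine ⟨hs, ?_⟩
    rw [pre, if_pos (Or.inl hl), hl]
    exact bot_lt_finVal _
  · -- left neighbor is ⊤
    have hnp : ¬ Plat c i := by
      rintro ⟨n, hn1, hn2⟩
      exact finVal_ne_top n (hn1.symm.trans hl)
    have hs : sVal c i = -1 := by
      rw [sVal, if_neg hnp, sBase,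
        if_neg (by rw [hl]; exact not_lt.mpr le_top)]
    right; right
    refine ⟨hs, ?_⟩
    rw [pre, if_pos (Or.inr hl), hl]
    exact finVal_lt_top _
  · -- left neighbor finite
    have hpre1 : pre c (i - 1) = finVal (a + sVal c (i - 1)) := pre_fin hl
    rcases lt_trichotomy a b with hab | hab | hab
    · have hnp : ¬ Plat c i := by
        rintro ⟨n, hn1, hn2⟩
        rw [hl] at hn1; rw [hb] at hn2
        have := finVal_inj hn1; have := finVal_inj hn2; omega
      have hs : sVal c i = 1 := by
        rw [sVal, if_neg hnp, sBase,
          if_pos (by rw [hl, hb]; exact finVal_lt_finVal.mpr hab)]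
      left
      refine ⟨hs, ?_⟩
      rw [hpre1]
      rcases sVal_range c (i - 1) with h1 | h1 | h1 <;>
        rw [h1] <;> exact finVal_lt_finVal.mpr (by omega)
    · subst hab
      have hplat : Plat c i := ⟨a, hl, hb⟩
      have hsp := sVal_plat c i hplat
      rcases sVal_range c i with h1 | h1 | h1
      · left
        refine ⟨h1, ?_⟩
        rw [hpre1, hsp, h1]
        exact finVal_lt_finVal.mpr (by omega)
      · right; left
        refine ⟨h1, ?_⟩
        rw [hpre1, hsp, h1]
        norm_num
      · right; right
        refine ⟨h1, ?_⟩
        rw [hpre1, hsp, h1]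
        exact finVal_lt_finVal.mpr (by omega)
    · have hnp : ¬ Plat c i := by
        rintro ⟨n, hn1, hn2⟩
        rw [hl] at hn1; rw [hb] at hn2
        have := finVal_inj hn1; have := finVal_inj hn2; omega
      have hs : sVal c i = -1 := by
        rw [sVal, if_neg hnp, sBase,
          if_neg (by rw [hl, hb, finVal_lt_finVal.not]; omega)]
      right; right
      refine ⟨hs, ?_⟩
      rw [hpre1]
      rcases sVal_range c (i - 1) with h1 | h1 | h1 <;>
        rw [h1] <;> exact finVal_lt_finVal.mpr (by omega)

lemma nbhd_zero (c : Config) (i : ℤ) :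
    nbhd 1 c i (0 : Fin 2) = beta 1 (refH (c i)) (c (i - 1)) := by
  rw [nbhd]
  norm_num
  rw [show i + -1 = i - 1 by ring]

lemma globalF_pre (c : Config) : globalF 1 lamL (pre c) = c := by
  funext i
  rcases EZ_cases (c i) with h | h | ⟨b, h⟩
  · have hp : pre c i = c i := by rw [pre, if_pos (Or.inl h)]
    rw [globalF]
    rw [hp, h]
    simp
  · have hp : pre c i = c i := by rw [pre, if_pos (Or.inr h)]
    rw [globalF]
    rw [hp, h]
    simp
  · have hpi : pre c i = finVal (b + sVal c i) := pre_fin h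
    rw [globalF, if_neg (by rw [hpi]; exact finVal_not_inf _)]
    have h0 : nbhd 1 (pre c) i (0 : Fin 2) = beta 1 (b + sVal c i) (pre c (i - 1)) := by
      rw [nbhd_zero, hpi, refH_finVal]
    rw [lamL, h0, hpi, valZ_finVal, h]
    rcases cmp_lemma c i b h with ⟨h1, hlt⟩ | ⟨h1, heq⟩ | ⟨h1, hgt⟩
    · rw [h1] at *
      rw [if_pos (beta_of_lt hlt)]
      norm_num
    · rw [h1] at *
      rw [heq]
      norm_num [beta_of_eq]
    · rw [h1] at *
      have hgt' : finVal 0 < beta 1 (b + -1) (pre c (i - 1)) := by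
        apply beta_of_gt
        rwa [show b + -1 = b - 1 by ring]
      rw [if_neg (asymm hgt'), if_pos hgt']
      norm_num

section shift
variable {c : Config} {p : ℤ} (hc : ∀ i, c (i + p) = c i)

include hc

lemma Plat_shift (i : ℤ) : Plat c (i + p) ↔ Plat c i := by
  unfold Plat
  rw [show i + p - 1 = (i - 1) + p by ring, hc, hc]

lemma sBase_shift (i : ℤ) : sBase c (i + p) = sBase c i := by
  rw [sBase, sBase, show i + p - 1 = (i - 1) + p by ring, hc, hc]

lemma sVal_shift (i : ℤ) : sVal c (i + p) = sVal c i := by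
  rw [sVal, sVal]
  by_cases hp : Plat c i
  · rw [if_pos hp, if_pos ((Plat_shift hc i).mpr hp)]
    by_cases h : ∃ k : ℕ, ¬ Plat c (i - (k + 1))
    · have h2 : ∃ k : ℕ, ¬ Plat c (i + p - (k + 1)) := by
        obtain ⟨k, hk⟩ := h
        exact ⟨k, fun hx => hk ((Plat_shift hc _).mp
          (by rwa [show (i - (k + 1)) + p = i + p - (k + 1) by ring]))⟩
      rw [dif_pos h, dif_pos h2]
      have hf : Nat.find h2 = Nat.find h := by
        apply find_eq
        intro n
        rw [show i + p - ((n : ℤ) + 1) = (i - ((n : ℤ) + 1)) + p by ring]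
        exact not_congr (Plat_shift hc _)
      rw [hf, show i + p - ((Nat.find h : ℤ)) - 1 = (i - (Nat.find h : ℤ) - 1) + p by ring,
        sBase_shift hc]
    · have h2 : ¬ ∃ k : ℕ, ¬ Plat c (i + p - (k + 1)) := by
        push_neg at h ⊢
        intro k
        rw [show i + p - ((k : ℤ) + 1) = (i - ((k : ℤ) + 1)) + p by ring]
        exact (Plat_shift hc _).mpr (h k)
      rw [dif_neg h, dif_neg h2]
  · rw [if_neg hp, if_neg (fun hx => hp ((Plat_shift hc i).mp hx)), sBase_shift hc]

lemma pre_shift (i : ℤ) : pre c (i + p) = pre c i := by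
  rw [pre, pre, hc, sVal_shift hc]

end shift

end

/-- `f_L` is surjective on all configurations and `P`-surjective: every configuration
has a preimage under `f_L`, and every periodic configuration has a periodic preimage. -/
theorem L_surjective :
    Function.Surjective (globalF 1 lamL) ∧
    (∀ c : Config, PeriodicConf c → ∃ c', PeriodicConf c' ∧ globalF 1 lamL c' = c) := by
  constructor
  · intro c
    exact ⟨pre c, globalF_pre c⟩
  · rintro c ⟨p, hp0, hper⟩
    exact ⟨pre c, ⟨p, hp0, fun i => pre_shift hper i⟩, globalF_pre c⟩
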